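/- In the Markov-modulated setting, assume P_i(A_1^i=1)=1 for all i∈S. Then there exists a family (σ_j)_{j∈S} of signs in {±1} such that for all n≥1, sign(Π_n)=σ_{M_n}/σ_{M_0} a.s., and consequently Π_n=σ_{M_n}e^{g(M_n)−g(M_0)}/σ_{M_0} a.s. for a suitable function g:S→R. -/

import Mathlib

open MeasureTheory ProbabilityTheory Filter
open scoped ENNReal NNReal Topology

noncomputable section

namespace Perpetuities

/-- The positive part of the logarithm, with the convention `log⁺ 0 = 0`. -/
def logplus (x : ℝ) : ℝ := max (Real.log x) 0

/-- Weak convergence of a sequence of (probability) measures on `ℝ`. -/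
def WeakLim (μ : ℕ → Measure ℝ) (ν : Measure ℝ) : Prop :=
  ∀ f : BoundedContinuousFunction ℝ ℝ,
    Tendsto (fun n => ∫ x, f x ∂ μ n) atTop (nhds (∫ x, f x ∂ ν))

/-- `|f n| → ∞` in `μ`-probability. -/
def TendstoInfInMeasure {Ω : Type*} [MeasurableSpace Ω] (μ : Measure Ω) (f : ℕ → Ω → ℝ) : Prop :=
  ∀ x : ℝ, 0 < x → Tendsto (fun n => μ {ω | |f n ω| ≤ x}) atTop (nhds 0)

/-- `d` is the lattice span (period) of the distribution of the `ℕ`-valued random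
variable `T` under `μ`, i.e. `d` is the greatest common divisor of the support. -/
def LatticeSpan {Ω : Type*} [MeasurableSpace Ω] (μ : Measure Ω) (T : Ω → ℕ) (d : ℕ) : Prop :=
  (∀ n, 0 < μ {ω | T ω = n} → d ∣ n) ∧ ∀ e : ℕ, (∀ n, 0 < μ {ω | T ω = n} → e ∣ n) → e ∣ d

/-- The Markov-modulated setting: an ergodic (irreducible, aperiodic, positive recurrent)
Markov chain `M` on a countable state space `S` with transition matrix `p` and stationary
distribution `π`, modulating a sequence `(A_n, B_n)_{n ≥ 1}` of real random pairs (indexed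
here so that `A n`, `B n` are the paper's `A_{n+1}`, `B_{n+1}`): conditionally on the whole
path of the chain, the pairs are independent and the conditional law of `(A_{n+1}, B_{n+1})`
given the path depends only on `(M_n, M_{n+1})`, via the stochastic kernel `K`.
`P i` is the underlying probability measure conditioned on `M 0 = i`. -/
structure MMSetting (S : Type*) (Ω : Type*) [MeasurableSpace S] [MeasurableSingletonClass S]
    [Countable S] [MeasurableSpace Ω] where
  P : S → Measure Ω
  prob : ∀ i, IsProbabilityMeasure (P i)
  π : S → ℝ≥0∞
  πsum : ∑' i, π i = 1
  πpos : ∀ i, 0 < π i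
  p : S → S → ℝ≥0∞
  psum : ∀ i, ∑' j, p i j = 1
  stationary : ∀ j, ∑' i, π i * p i j = π j
  K : S → S → Measure (ℝ × ℝ)
  Kprob : ∀ i j, IsProbabilityMeasure (K i j)
  M : ℕ → Ω → S
  A : ℕ → Ω → ℝ
  B : ℕ → Ω → ℝ
  measM : ∀ n, Measurable (M n)
  measA : ∀ n, Measurable (A n)
  measB : ∀ n, Measurable (B n)
  start : ∀ i, P i {ω | M 0 ω = i} = 1
  chain : ∀ (i : S) (n : ℕ) (path : ℕ → S), path 0 = i →
    P i (⋂ k ∈ Finset.range (n + 1), {ω | M k ω = path k})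
      = ∏ k ∈ Finset.range n, p (path k) (path (k + 1))
  modulated : ∀ (i : S) (n : ℕ) (path : ℕ → S) (E : ℕ → Set (ℝ × ℝ)), path 0 = i →
    (∀ k, MeasurableSet (E k)) →
    P i ((⋂ k ∈ Finset.range (n + 1), {ω | M k ω = path k}) ∩
        ⋂ k ∈ Finset.range n, {ω | (A k ω, B k ω) ∈ E k})
      = P i (⋂ k ∈ Finset.range (n + 1), {ω | M k ω = path k})
        * ∏ k ∈ Finset.range n, K (path k) (path (k + 1)) (E k)
  irreducible : ∀ i j, ∃ n, 0 < P i {ω | M n ω = j}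
  recurrent : ∀ i, P i {ω | ∃ n, 0 < n ∧ M n ω = i} = 1
  posRecurrent : ∀ i, ∫⁻ ω, ((sInf {n | 0 < n ∧ M n ω = i} : ℕ) : ℝ≥0∞) ∂ P i < ⊤
  aperiodic : ∀ (i : S) (d : ℕ), (∀ n, 0 < n → 0 < P i {ω | M n ω = i} → d ∣ n) → d = 1

namespace MMSetting

variable {S : Type*} [MeasurableSpace S] [MeasurableSingletonClass S] [Countable S]
variable {Ω : Type*} [MeasurableSpace Ω]
variable (X : MMSetting S Ω)

/-- `Pπ = ∑ i, π i • P i`, the stationary (unconditional) probability measure. -/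
def Pπ : Measure Ω := Measure.sum fun i => X.π i • X.P i

/-- `Pprod n = Π_n = A_1 ⋯ A_n`, with `Π_0 = 1`. -/
def Pprod (n : ℕ) (ω : Ω) : ℝ := ∏ k ∈ Finset.range n, X.A k ω

/-- `Ssum n = ∑_{k=1}^n Π_{k-1} B_k`, the value `Ψ_1 ∘ ⋯ ∘ Ψ_n (0)` of the backward
iteration started at `0`. -/
def Ssum (n : ℕ) (ω : Ω) : ℝ := ∑ k ∈ Finset.range n, X.Pprod k ω * X.B k ω

/-- `Zb Z n = Ψ_1 ∘ ⋯ ∘ Ψ_n (Z) = Π_n Z + ∑_{k=1}^n Π_{k-1} B_k`, the backward iteration. -/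
def Zb (Z : Ω → ℝ) (n : ℕ) (ω : Ω) : ℝ := X.Pprod n ω * Z ω + X.Ssum n ω

/-- `Zf Z n = Ψ_n ∘ ⋯ ∘ Ψ_1 (Z)`, the forward iteration. -/
def Zf (Z : Ω → ℝ) : ℕ → Ω → ℝ
  | 0 => Z
  | n + 1 => fun ω => X.A n ω * Zf Z n ω + X.B n ω

/-- The perpetuity `Z_∞ = ∑_{n ≥ 1} Π_{n-1} B_n`. -/
def Zinf (ω : Ω) : ℝ := ∑' n, X.Pprod n ω * X.B n ω

/-- `tau i n = τ_n(i)`, the `n`-th return time of the driving chain to the state `i`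
(`τ_0(i) = 0`). -/
def tau (i : S) : ℕ → Ω → ℕ
  | 0 => fun _ => 0
  | n + 1 => fun ω => sInf {k | tau i n ω < k ∧ X.M k ω = i}

/-- `A_1^i = Π_{τ(i)}`. -/
def Ai (i : S) (ω : Ω) : ℝ := X.Pprod (X.tau i 1 ω) ω

/-- `B_1^i = ∑_{k=1}^{τ(i)} Π_{k-1} B_k`. -/
def Bi (i : S) (ω : Ω) : ℝ := X.Ssum (X.tau i 1 ω) ω

/-- `W^i = max_{1 ≤ k ≤ τ(i)} |Π_{k-1} B_k|`. -/
def Wi (i : S) (ω : Ω) : ℝ :=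
  (((Finset.range (X.tau i 1 ω)).sup fun k => ‖X.Pprod k ω * X.B k ω‖₊ : ℝ≥0) : ℝ)

/-- `S_{τ(i)} = - log |Π_{τ(i)}|`. -/
def Stau (i : S) (ω : Ω) : ℝ := - Real.log |X.Ai i ω|

/-- The function `J_i`: `J_i(0) = 1`, and for `x > 0`, `J_i(x) = x / E_i (S_{τ(i)}⁺ ∧ x)`
if `P_i(S_{τ(i)} ≤ 0) < 1`, and `J_i(x) = x` otherwise. -/
def Ji (i : S) (x : ℝ) : ℝ :=
  if x = 0 then 1
  else if X.P i {ω | X.Stau i ω ≤ 0} < 1 then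
    x / ∫ ω, min (max (X.Stau i ω) 0) x ∂ X.P i
  else x

/-- `τ̂(i) = inf {k ≥ 1 : M_k = i, Π_k = 1}`. -/
def hatτ (i : S) (ω : Ω) : ℕ := sInf {k | 0 < k ∧ X.M k ω = i ∧ X.Pprod k ω = 1}

/-- `Z` is an admissible initial value: it is (conditionally on `M 0`, i.e. under each `P i`)
independent of the modulated sequence `(M_n, A_n, B_n)_{n ≥ 1}`. -/
def Admissible (Z : Ω → ℝ) : Prop :=
  Measurable Z ∧
    ∀ i : S, IndepFun Z (fun ω => fun n : ℕ => (X.M (n + 1) ω, X.A n ω, X.B n ω)) (X.P i)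

/-- The degeneracy condition: `A_1 c_{M_1} + B_1 = c_{M_0}` a.s. for the family `c`. -/
def DegenD (c : S → ℝ) : Prop :=
  ∀ᵐ ω ∂ X.Pπ, X.A 0 ω * c (X.M 1 ω) + X.B 0 ω = c (X.M 0 ω)

/-- The dual degeneracy condition: `A_1 c_{M_0} + B_1 = c_{M_1}` a.s. for the family `c`. -/
def DegenDdual (c : S → ℝ) : Prop :=
  ∀ᵐ ω ∂ X.Pπ, X.A 0 ω * c (X.M 0 ω) + X.B 0 ω = c (X.M 1 ω)

end MMSetting

end Perpetuities

namespace Perpetuities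

open MMSetting


lemma eq_dirac_of_singleton {μ : Measure ℝ} [IsProbabilityMeasure μ] {a : ℝ} (h : μ {a} = 1) :
    μ = Measure.dirac a := by
  ext s hs
  rw [Measure.dirac_apply' _ hs]
  by_cases ha : a ∈ s
  · have h1 : μ {a} ≤ μ s := measure_mono (by simpa using ha)
    have : μ s = 1 := le_antisymm prob_le_one (h ▸ h1)
    simp [ha, this]
  · have h2 : μ s ≤ μ ({a}ᶜ) := measure_mono (by intro x hx; simp; rintro rfl; exact ha hx)
    have h3 : μ ({a}ᶜ) = 0 := by
      rw [measure_compl (measurableSet_singleton a) (measure_ne_top μ _), h]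
      simp
    simp [ha, le_antisymm (h2.trans h3.le) zero_le]

lemma dirac_inj {a b : ℝ} (h : (Measure.dirac a : Measure ℝ) = Measure.dirac b) : a = b := by
  have h1 : (Measure.dirac a : Measure ℝ) {a} = 1 := by
    rw [Measure.dirac_apply' _ (measurableSet_singleton a)]; simp
  rw [h, Measure.dirac_apply' _ (measurableSet_singleton a)] at h1
  by_contra hab
  rw [Set.indicator_of_notMem (by simpa using fun hh => hab hh.symm)] at h1
  exact one_ne_zero h1.symm

/-- If `X * g(Y)` is a.s. equal to `c ≠ 0` for independent `X, Y` (product measure),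
then the first marginal is a Dirac measure at some nonzero point. -/
lemma dirac_of_prod_mul {β : Type*} [MeasurableSpace β]
    {μ : Measure ℝ} {ν : Measure β} [IsProbabilityMeasure μ] [IsProbabilityMeasure ν]
    {g : β → ℝ} (hg : Measurable g) {c : ℝ} (hc : c ≠ 0)
    (h : (μ.prod ν) {q : ℝ × β | q.1 * g q.2 = c} = 1) :
    ∃ a : ℝ, a ≠ 0 ∧ μ = Measure.dirac a ∧ ν {z | g z = c / a} = 1 := by
  have hE : MeasurableSet {q : ℝ × β | q.1 * g q.2 = c} :=
    (measurable_fst.mul (hg.comp measurable_snd)) (measurableSet_singleton c)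
  have hprod : (μ.prod ν) {q : ℝ × β | q.1 * g q.2 = c}
      = ∫⁻ y, ν {z | y * g z = c} ∂μ := by
    rw [Measure.prod_apply hE]; rfl
  have hle : (fun y => ν {z | y * g z = c}) ≤ᵐ[μ] fun _ => 1 :=
    Filter.Eventually.of_forall fun y => prob_le_one
  have hint : ∫⁻ y, ν {z | y * g z = c} ∂μ = 1 := by rw [← hprod, h]
  have hone : (fun y => ν {z | y * g z = c}) =ᵐ[μ] fun _ => (1 : ℝ≥0∞) := by
    refine ae_eq_of_ae_le_of_lintegral_le hle (by rw [hint]; exact ENNReal.one_ne_top)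
      aemeasurable_const ?_
    rw [hint]; simp
  -- a.e. y, y ≠ 0 and ν {g = c / y} = 1
  have hae : ∀ᵐ y ∂μ, y ≠ 0 ∧ ν {z | g z = c / y} = 1 := by
    filter_upwards [hone] with y hy
    have hy0 : y ≠ 0 := by
      rintro rfl
      have hempty : {z : β | (0:ℝ) * g z = c} = ∅ :=
        Set.eq_empty_iff_forall_notMem.mpr fun z hz => hc (by simpa using hz.symm)
      rw [hempty] at hy; simp at hy
    refine ⟨hy0, ?_⟩
    have hsets : {z | g z = c / y} = {z | y * g z = c} := by
      ext z; simp only [Set.mem_setOf_eq]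
      constructor
      · intro hz; rw [hz]; field_simp
      · intro hz; field_simp [hy0]; linarith [hz]
    rw [hsets]; exact hy
  haveI : (ae μ).NeBot := ae_neBot.mpr (IsProbabilityMeasure.ne_zero μ)
  obtain ⟨a, ha0, hν⟩ : ∃ a : ℝ, a ≠ 0 ∧ ν {z | g z = c / a} = 1 := by
    obtain ⟨y, hy⟩ := hae.exists
    exact ⟨y, hy.1, hy.2⟩
  refine ⟨a, ha0, ?_, hν⟩
  have hμa : ∀ᵐ y ∂μ, y = a := by
    filter_upwards [hae] with y ⟨hy0, hy⟩
    have hg1 : MeasurableSet {z | g z = c / y} := hg (measurableSet_singleton _)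
    have hg2 : MeasurableSet {z | g z = c / a} := hg (measurableSet_singleton _)
    have h1 : ν ({z | g z = c / y}ᶜ) = 0 := (prob_compl_eq_zero_iff hg1).mpr hy
    have h2 : ν ({z | g z = c / a}ᶜ) = 0 := (prob_compl_eq_zero_iff hg2).mpr hν
    have h3 : ν (({z | g z = c / y} ∩ {z | g z = c / a})ᶜ) = 0 := by
      rw [Set.compl_inter]
      exact le_antisymm ((measure_union_le _ _).trans (by rw [h1, h2]; simp)) zero_le
    have h4 : ν ({z | g z = c / y} ∩ {z | g z = c / a}) = 1 :=
      (prob_compl_eq_zero_iff (hg1.inter hg2)).mp h3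
    have hpos : ν ({z | g z = c / y} ∩ {z | g z = c / a}) ≠ 0 := by rw [h4]; exact one_ne_zero
    obtain ⟨z, hz1, hz2⟩ := nonempty_of_measure_ne_zero hpos
    have heq : c / y = c / a := by
      simp only [Set.mem_setOf_eq] at hz1 hz2; rw [← hz1, ← hz2]
    have := (div_eq_div_iff hy0 ha0).mp heq
    exact mul_left_cancel₀ hc (by linarith)
  refine eq_dirac_of_singleton ?_
  have h2 : μ ({a}ᶜ) = 0 := by
    have h5 : μ {y | ¬ (y = a)} = 0 := ae_iff.mp hμa
    have : ({a}ᶜ : Set ℝ) = {y | ¬ (y = a)} := by ext y; simp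
    rw [this]; exact h5
  exact (prob_compl_eq_zero_iff (measurableSet_singleton a)).mp h2

lemma pi_dirac : ∀ (n : ℕ) (μ : Fin (n+1) → Measure ℝ), (∀ k, IsProbabilityMeasure (μ k)) →
    ∀ (c : ℝ), c ≠ 0 → (Measure.pi μ) {x | ∏ k, x k = c} = 1 →
    ∃ a : Fin (n+1) → ℝ, (∀ k, a k ≠ 0 ∧ μ k = Measure.dirac (a k)) ∧ ∏ k, a k = c := by
  have split : ∀ (n : ℕ) (μ : Fin (n+1) → Measure ℝ), (∀ k, IsProbabilityMeasure (μ k)) →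
      ∀ (c : ℝ), c ≠ 0 → (Measure.pi μ) {x | ∏ k, x k = c} = 1 →
      ∃ a₀ : ℝ, a₀ ≠ 0 ∧ μ 0 = Measure.dirac a₀ ∧
        (Measure.pi fun j : Fin n => μ ((0 : Fin (n+1)).succAbove j))
          {z : Fin n → ℝ | ∏ j, z j = c / a₀} = 1 := by
    intro n μ hμ c hc h
    haveI := hμ
    set ν := Measure.pi fun j : Fin n => μ ((0 : Fin (n+1)).succAbove j) with hν
    have mp := MeasureTheory.measurePreserving_piFinSuccAbove μ 0
    have hgmeas : Measurable fun z : Fin n → ℝ => ∏ j, z j :=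
      Finset.univ.measurable_prod fun j _ => measurable_pi_apply j
    have hT : MeasurableSet {q : ℝ × (Fin n → ℝ) | q.1 * ∏ j, q.2 j = c} :=
      (measurable_fst.mul (hgmeas.comp measurable_snd)) (measurableSet_singleton c)
    have hpre : (MeasurableEquiv.piFinSuccAbove (fun _ => ℝ) 0) ⁻¹'
        {q : ℝ × (Fin n → ℝ) | q.1 * ∏ j, q.2 j = c} = {x | ∏ k, x k = c} := by
      ext x
      simp only [Set.mem_preimage, Set.mem_setOf_eq, MeasurableEquiv.piFinSuccAbove_apply]
      rw [Fin.prod_univ_succAbove x 0]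
      rfl
    have hmeasT : ((μ 0).prod ν) {q : ℝ × (Fin n → ℝ) | q.1 * ∏ j, q.2 j = c} = 1 := by
      rw [← mp.measure_preimage hT.nullMeasurableSet, hpre, h]
    obtain ⟨a₀, ha₀, hd, hrest⟩ := dirac_of_prod_mul hgmeas hc hmeasT
    exact ⟨a₀, ha₀, hd, hrest⟩
  intro n
  induction n with
  | zero =>
    intro μ hμ c hc h
    haveI := hμ
    obtain ⟨a₀, ha₀, hd, hrest⟩ := split 0 μ hμ c hc h
    have hca : c / a₀ = 1 := by
      by_contra hne
      have : {z : Fin 0 → ℝ | ∏ j, z j = c / a₀} = ∅ := by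
        ext z; simp only [Set.mem_setOf_eq, Fin.prod_univ_zero, Set.mem_empty_iff_false,
          iff_false]
        exact fun hh => hne hh.symm
      rw [this] at hrest; simp at hrest
    have hac : a₀ = c := by field_simp at hca; linarith
    refine ⟨fun _ => c, fun k => ?_, by simp⟩
    have hk : k = 0 := Fin.fin_one_eq_zero k
    rw [hk]
    exact ⟨hac ▸ ha₀, hac ▸ hd⟩
  | succ n ih =>
    intro μ hμ c hc h
    haveI := hμ
    obtain ⟨a₀, ha₀, hd, hrest⟩ := split (n+1) μ hμ c hc h
    obtain ⟨a', ha', hprod'⟩ := ih (fun j => μ ((0 : Fin (n+2)).succAbove j))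
      (fun j => hμ _) (c / a₀) (div_ne_zero hc ha₀) hrest
    refine ⟨Fin.cons a₀ a', fun k => ?_, ?_⟩
    · refine Fin.cases ?_ (fun j => ?_) k
      · simpa using ⟨ha₀, hd⟩
      · have := ha' j
        simpa [Fin.zero_succAbove] using this
    · rw [Fin.prod_univ_succ]
      simp only [Fin.cons_zero, Fin.cons_succ]
      rw [hprod']
      field_simp

-- AUXMARKER

section AuxMarkov

lemma nat_sInf_eq {T : Set ℕ} {n : ℕ} (hn : n ∈ T) (hlt : ∀ k, k < n → k ∉ T) : sInf T = n := by
  refine le_antisymm (Nat.sInf_le hn) ?_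
  by_contra hh
  push_neg at hh
  exact hlt _ hh (Nat.sInf_mem ⟨n, hn⟩)

namespace MMSetting

variable {S : Type*} [MeasurableSpace S] [MeasurableSingletonClass S] [Countable S]
variable {Ω : Type*} [MeasurableSpace Ω]
variable (X : MMSetting S Ω)

/-- The cylinder set determined by the first `n+1` states. -/
def cyl (n : ℕ) (f : ℕ → S) : Set Ω := ⋂ k ∈ Finset.range (n+1), {ω | X.M k ω = f k}

lemma measurableSet_cyl (n : ℕ) (f : ℕ → S) : MeasurableSet (X.cyl n f) := by
  refine MeasurableSet.biInter (Finset.range (n+1)).countable_toSet fun k _ => ?_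
  exact (X.measM k) (measurableSet_singleton (f k))

lemma mem_cyl {n : ℕ} {f : ℕ → S} {ω : Ω} (hω : ω ∈ X.cyl n f) {k : ℕ} (hk : k ≤ n) :
    X.M k ω = f k := by
  have := Set.mem_iInter₂.mp hω k (Finset.mem_range.mpr (by omega))
  exact this

lemma chain' (i : S) (n : ℕ) (f : ℕ → S) (hf : f 0 = i) :
    X.P i (X.cyl n f) = ∏ k ∈ Finset.range n, X.p (f k) (f (k+1)) :=
  X.chain i n f hf

/-- The `A`-marginal of the kernel `K`. -/
def mu (j l : S) : Measure ℝ := (X.K j l).map Prod.fst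

lemma mu_prob (j l : S) : IsProbabilityMeasure (X.mu j l) := by
  haveI := X.Kprob j l
  exact Measure.isProbabilityMeasure_map measurable_fst.aemeasurable

lemma mu_apply (j l : S) {s : Set ℝ} (hs : MeasurableSet s) :
    X.mu j l s = X.K j l (s ×ˢ (Set.univ : Set ℝ)) := by
  rw [mu, Measure.map_apply measurable_fst hs]
  congr 1
  ext q
  simp

lemma rect (i : S) (n : ℕ) (f : ℕ → S) (hf : f 0 = i) (s : ℕ → Set ℝ)
    (hs : ∀ k, MeasurableSet (s k)) :
    X.P i (X.cyl n f ∩ ⋂ k ∈ Finset.range n, {ω | X.A k ω ∈ s k})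
      = X.P i (X.cyl n f) * ∏ k ∈ Finset.range n, X.mu (f k) (f (k+1)) (s k) := by
  have h := X.modulated i n f (fun k => (s k) ×ˢ (Set.univ : Set ℝ)) hf
    (fun k => (hs k).prod MeasurableSet.univ)
  have hsets : ∀ k, {ω | (X.A k ω, X.B k ω) ∈ (s k) ×ˢ (Set.univ : Set ℝ)}
      = {ω | X.A k ω ∈ s k} := by
    intro k; ext ω; simp
  have hK : ∀ k ∈ Finset.range n, X.K (f k) (f (k+1)) ((s k) ×ˢ (Set.univ : Set ℝ))
      = X.mu (f k) (f (k+1)) (s k) := fun k _ => (X.mu_apply _ _ (hs k)).symm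
  simp only [hsets] at h
  rw [Finset.prod_congr rfl hK] at h
  exact h

lemma single (i : S) (n : ℕ) (f : ℕ → S) (hf : f 0 = i) (k : ℕ) (hk : k < n)
    {s : Set ℝ} (hs : MeasurableSet s) :
    X.P i (X.cyl n f ∩ {ω | X.A k ω ∈ s}) = X.P i (X.cyl n f) * X.mu (f k) (f (k+1)) s := by
  haveI := fun j l => X.mu_prob j l
  have h := X.rect i n f hf (fun m => if m = k then s else Set.univ)
    (fun m => by by_cases hm : m = k <;> simp [hm, hs])
  have hset : (⋂ m ∈ Finset.range n, {ω | X.A m ω ∈ (if m = k then s else Set.univ)})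
      = {ω | X.A k ω ∈ s} := by
    ext ω
    simp only [Set.mem_iInter, Finset.mem_range, Set.mem_setOf_eq]
    constructor
    · intro hh
      have := hh k hk
      simpa using this
    · intro hh m hm
      by_cases hmk : m = k <;> simp [hmk, hh]
  have hprod : (∏ m ∈ Finset.range n, X.mu (f m) (f (m+1)) (if m = k then s else Set.univ))
      = X.mu (f k) (f (k+1)) s := by
    rw [Finset.prod_eq_single k (fun m _ hm => by simp [hm, measure_univ])
      (fun hk' => absurd (Finset.mem_range.mpr hk) hk')]
    simp
  rw [hset, hprod] at h
  exact h

lemma tau_one_apply (j : S) (ω : Ω) :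
    X.tau j 1 ω = sInf {k | 0 < k ∧ X.M k ω = j} := by
  show sInf {k | X.tau j 0 ω < k ∧ X.M k ω = j} = _
  rfl

lemma tau_eq_on_cyl {j : S} {n : ℕ} {f : ℕ → S} (h0 : 0 < n) (hfn : f n = j)
    (hint : ∀ k, 0 < k → k < n → f k ≠ j) {ω : Ω} (hω : ω ∈ X.cyl n f) :
    X.tau j 1 ω = n := by
  rw [tau_one_apply]
  refine nat_sInf_eq ⟨h0, by rw [X.mem_cyl hω le_rfl, hfn]⟩ ?_
  rintro k hk ⟨hk0, hkM⟩
  exact hint k hk0 hk (by rw [← X.mem_cyl hω hk.le]; exact hkM)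

lemma measurable_tau_one (j : S) : Measurable (fun ω => X.tau j 1 ω) := by
  apply measurable_to_countable'
  intro m
  have hT : ∀ ω, (0 : ℕ) ∉ {k | 0 < k ∧ X.M k ω = j} := by intro ω h; exact absurd h.1 (lt_irrefl 0)
  match m with
  | 0 =>
    have : (fun ω => X.tau j 1 ω) ⁻¹' {0} = ⋂ k : ℕ, {ω | X.M (k+1) ω ≠ j} := by
      ext ω
      simp only [Set.mem_preimage, Set.mem_singleton_iff, Set.mem_iInter, Set.mem_setOf_eq]
      rw [X.tau_one_apply, Nat.sInf_eq_zero]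
      constructor
      · rintro (h | h)
        · exact absurd h (hT ω)
        · intro k hk
          exact (Set.eq_empty_iff_forall_notMem.mp h (k+1)) ⟨Nat.succ_pos k, hk⟩
      · intro h
        right
        rw [Set.eq_empty_iff_forall_notMem]
        rintro k ⟨hk0, hkM⟩
        obtain ⟨k', rfl⟩ := Nat.exists_eq_succ_of_ne_zero hk0.ne'
        exact h k' hkM
    rw [this]
    exact MeasurableSet.iInter fun k => ((X.measM (k+1)) (measurableSet_singleton j)).compl
  | (m+1) =>
    have : (fun ω => X.tau j 1 ω) ⁻¹' {m+1}
        = {ω | X.M (m+1) ω = j} ∩ ⋂ k ∈ Finset.range (m+1), {ω | ¬(0 < k ∧ X.M k ω = j)} := by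
      ext ω
      simp only [Set.mem_preimage, Set.mem_singleton_iff, Set.mem_inter_iff, Set.mem_setOf_eq,
        Set.mem_iInter, Finset.mem_range]
      rw [X.tau_one_apply]
      constructor
      · intro h
        have hne : {k | 0 < k ∧ X.M k ω = j}.Nonempty := by
          by_contra hh
          rw [Set.not_nonempty_iff_eq_empty.mp hh] at h
          simp at h
        have hmem := Nat.sInf_mem hne
        rw [h] at hmem
        refine ⟨hmem.2, fun k hk => ?_⟩
        have := Nat.notMem_of_lt_sInf (h ▸ hk : k < sInf {k | 0 < k ∧ X.M k ω = j})
        exact this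
      · rintro ⟨hM, hlt⟩
        exact nat_sInf_eq ⟨Nat.succ_pos m, hM⟩ (fun k hk => hlt k hk)
    rw [this]
    refine ((X.measM (m+1)) (measurableSet_singleton j)).inter ?_
    refine MeasurableSet.biInter (Finset.range (m+1)).countable_toSet fun k _ => ?_
    by_cases hk : 0 < k
    · have : {ω | ¬(0 < k ∧ X.M k ω = j)} = {ω | X.M k ω = j}ᶜ := by
        ext ω; simp [hk]
      rw [this]
      exact ((X.measM k) (measurableSet_singleton j)).compl
    · have : {ω | ¬(0 < k ∧ X.M k ω = j)} = Set.univ := by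
        ext ω; simp [hk]
      rw [this]
      exact MeasurableSet.univ

lemma measurable_Pprod (n : ℕ) : Measurable (X.Pprod n) :=
  Finset.measurable_prod _ fun k _ => X.measA k

lemma measurable_Ai (j : S) : Measurable (X.Ai j) := by
  intro t ht
  have : X.Ai j ⁻¹' t = ⋃ m : ℕ, ((fun ω => X.tau j 1 ω) ⁻¹' {m} ∩ X.Pprod m ⁻¹' t) := by
    ext ω
    simp only [Set.mem_preimage, Set.mem_iUnion, Set.mem_inter_iff, Set.mem_singleton_iff]
    constructor
    · intro h
      exact ⟨X.tau j 1 ω, rfl, h⟩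
    · rintro ⟨m, hm, h⟩
      show X.Pprod (X.tau j 1 ω) ω ∈ t
      rw [hm]
      exact h
  rw [this]
  exact MeasurableSet.iUnion fun m =>
    ((X.measurable_tau_one j) (measurableSet_singleton m)).inter (X.measurable_Pprod m ht)

/-- An edge `(j, l)` along which the conditional law of `A` is a Dirac mass at a nonzero point. -/
def DiracEdge (j l : S) : Prop := ∃ x : ℝ, x ≠ 0 ∧ X.mu j l = Measure.dirac x

open Classical in
/-- The deterministic multiplier along an edge. -/
noncomputable def aval (j l : S) : ℝ := if h : X.DiracEdge j l then h.choose else 1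

lemma aval_spec {j l : S} (h : X.DiracEdge j l) :
    X.aval j l ≠ 0 ∧ X.mu j l = Measure.dirac (X.aval j l) := by
  rw [aval, dif_pos h]
  exact ⟨h.choose_spec.1, h.choose_spec.2⟩

end MMSetting

end AuxMarkov

section AuxMarkov2

namespace MMSetting

variable {S : Type*} [MeasurableSpace S] [MeasurableSingletonClass S] [Countable S]
variable {Ω : Type*} [MeasurableSpace Ω]
variable (X : MMSetting S Ω)

/-- Along any positive-probability first-return cycle, the multipliers are deterministic
and their product is `1`. -/
lemma cycle_prop (i : S) (honei : X.P i {ω | X.Ai i ω = 1} = 1)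
    (n : ℕ) (f : ℕ → S) (h0 : 0 < n) (hf0 : f 0 = i) (hfn : f n = i)
    (hint : ∀ k, 0 < k → k < n → f k ≠ i) (hpos : X.P i (X.cyl n f) ≠ 0) :
    (∀ k, k < n → X.DiracEdge (f k) (f (k+1))) ∧
      ∏ k ∈ Finset.range n, X.aval (f k) (f (k+1)) = 1 := by
  haveI := X.prob i
  haveI : ∀ j l, IsProbabilityMeasure (X.mu j l) := fun j l => X.mu_prob j l
  set w := X.P i (X.cyl n f) with hw
  have hwt : w ≠ ⊤ := measure_ne_top _ _
  -- Step 1 : a.e. on the cylinder, `Π_n = 1`.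
  have hAiSet : MeasurableSet {ω | X.Ai i ω = 1} := X.measurable_Ai i (measurableSet_singleton 1)
  have hcomp : X.P i ({ω | X.Ai i ω = 1}ᶜ) = 0 := by
    rw [measure_compl hAiSet (measure_ne_top _ _), honei]
    simp
  have hPset : MeasurableSet {ω | X.Pprod n ω = 1} :=
    X.measurable_Pprod n (measurableSet_singleton 1)
  have hsub : X.cyl n f \ {ω | X.Pprod n ω = 1} ⊆ {ω | X.Ai i ω = 1}ᶜ := by
    rintro ω ⟨hc, hne⟩
    simp only [Set.mem_compl_iff, Set.mem_setOf_eq] at *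
    intro hAi1
    apply hne
    rw [← hAi1]
    show X.Pprod n ω = X.Pprod (X.tau i 1 ω) ω
    rw [X.tau_eq_on_cyl h0 hfn hint hc]
  have hstep1 : X.P i (X.cyl n f ∩ {ω | X.Pprod n ω = 1}) = w := by
    have h1 : X.P i (X.cyl n f \ {ω | X.Pprod n ω = 1}) = 0 := measure_mono_null hsub hcomp
    have h2 := measure_inter_add_diff (μ := X.P i) (X.cyl n f) hPset
    rw [h1, add_zero] at h2
    exact h2
  -- Step 2 : the conditional law of `(A_0, …, A_{n-1})` is the product of the marginals.
  obtain ⟨m, rfl⟩ : ∃ m, n = m + 1 := ⟨n - 1, by omega⟩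
  set μs : Fin (m+1) → Measure ℝ := fun k => X.mu (f k) (f (k+1)) with hμs
  haveI : ∀ k, IsProbabilityMeasure (μs k) := fun k => X.mu_prob _ _
  have hmapmeas : Measurable (fun ω (k : Fin (m+1)) => X.A k ω) :=
    measurable_pi_lambda _ fun k => X.measA k
  have hpi : Measure.pi μs
      = w⁻¹ • ((X.P i).restrict (X.cyl (m+1) f)).map (fun ω (k : Fin (m+1)) => X.A k ω) := by
    apply Measure.pi_eq
    intro s hs
    rw [Measure.smul_apply, Measure.map_apply hmapmeas (MeasurableSet.univ_pi hs),
      Measure.restrict_apply (hmapmeas (MeasurableSet.univ_pi hs))]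
    have hpreim : (fun ω (k : Fin (m+1)) => X.A k ω) ⁻¹' (Set.pi Set.univ s)
        = ⋂ k ∈ Finset.range (m+1),
            {ω | X.A k ω ∈ (if h : k < m+1 then s ⟨k, h⟩ else Set.univ)} := by
      ext ω
      simp only [Set.mem_preimage, Set.mem_pi, Set.mem_univ, forall_true_left, Set.mem_iInter,
        Finset.mem_range, Set.mem_setOf_eq]
      constructor
      · intro hh k hk
        rw [dif_pos hk]
        exact hh ⟨k, hk⟩
      · intro hh k
        have := hh k k.isLt
        rwa [dif_pos k.isLt] at this
    rw [hpreim, Set.inter_comm,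
      X.rect i (m+1) f hf0 _ (fun k => by by_cases hk : k < m+1 <;> simp [hk, hs])]
    rw [← hw, smul_eq_mul, ← mul_assoc, ENNReal.inv_mul_cancel hpos hwt, one_mul]
    rw [← Fin.prod_univ_eq_prod_range
      (fun k => X.mu (f k) (f (k+1)) (if h : k < m+1 then s ⟨k, h⟩ else Set.univ)) (m+1)]
    refine Finset.prod_congr rfl fun k _ => ?_
    rw [dif_pos k.isLt]
  -- Step 3 : the product of the coordinates equals `1` a.s. under the product law.
  have hTmeas : MeasurableSet {x : Fin (m+1) → ℝ | ∏ k, x k = 1} :=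
    (Finset.univ.measurable_prod fun k _ => measurable_pi_apply k) (measurableSet_singleton 1)
  have hev : (Measure.pi μs) {x : Fin (m+1) → ℝ | ∏ k, x k = 1} = 1 := by
    rw [hpi, Measure.smul_apply, Measure.map_apply hmapmeas hTmeas,
      Measure.restrict_apply (hmapmeas hTmeas)]
    have hpreim : (fun ω (k : Fin (m+1)) => X.A k ω) ⁻¹' {x | ∏ k, x k = 1}
        = {ω | X.Pprod (m+1) ω = 1} := by
      ext ω
      simp only [Set.mem_preimage, Set.mem_setOf_eq, MMSetting.Pprod]
      rw [Fin.prod_univ_eq_prod_range (fun k => X.A k ω) (m+1)]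
    rw [hpreim, Set.inter_comm, hstep1]
    exact ENNReal.inv_mul_cancel hpos hwt
  obtain ⟨av, hav, havprod⟩ := pi_dirac m μs inferInstance 1 one_ne_zero hev
  have haval : ∀ k : Fin (m+1), X.aval (f k) (f (k+1)) = av k := by
    intro k
    have hde : X.DiracEdge (f k) (f (k+1)) := ⟨av k, (hav k).1, (hav k).2⟩
    exact dirac_inj ((X.aval_spec hde).2.symm.trans (hav k).2)
  constructor
  · intro k hk
    exact ⟨av ⟨k, hk⟩, (hav ⟨k, hk⟩).1, (hav ⟨k, hk⟩).2⟩
  · rw [← Fin.prod_univ_eq_prod_range (fun k => X.aval (f k) (f (k+1))) (m+1)]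
    rw [Finset.prod_congr rfl fun k _ => haval k]
    exact havprod

end MMSetting

end AuxMarkov2

section AuxMarkov3

/-- Concatenation of two paths, the second starting where the first ends. -/
def cat {S : Type*} (n : ℕ) (f g : ℕ → S) : ℕ → S := fun k => if k < n then f k else g (k - n)

lemma cat_zero {S : Type*} {n : ℕ} {f g : ℕ → S} (hjoin : g 0 = f n) : cat n f g 0 = f 0 := by
  unfold cat
  by_cases h : 0 < n
  · simp [h]
  · have hn : n = 0 := by omega
    simp [hn, hjoin]

lemma cat_last {S : Type*} (n m : ℕ) (f g : ℕ → S) : cat n f g (n + m) = g m := by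
  unfold cat
  have h : ¬ (n + m < n) := by omega
  simp [h]

lemma cat_edge {S : Type*} {M : Type*} [CommMonoid M] (F : S → S → M) (n m : ℕ)
    (f g : ℕ → S) (hjoin : g 0 = f n) :
    ∏ k ∈ Finset.range (n + m), F (cat n f g k) (cat n f g (k+1))
      = (∏ k ∈ Finset.range n, F (f k) (f (k+1))) * ∏ k ∈ Finset.range m, F (g k) (g (k+1)) := by
  rw [Finset.prod_range_add]
  congr 1
  · refine Finset.prod_congr rfl fun k hk => ?_
    have hkn := Finset.mem_range.mp hk
    have h1 : cat n f g k = f k := if_pos hkn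
    have h2 : cat n f g (k+1) = f (k+1) := by
      unfold cat
      by_cases h : k + 1 < n
      · simp [h]
      · have hk1 : k + 1 = n := by omega
        simp [h, hk1, hjoin]
    rw [h1, h2]
  · refine Finset.prod_congr rfl fun k hk => ?_
    have h1 : cat n f g (n + k) = g k := cat_last n k f g
    have h2 : cat n f g (n + k + 1) = g (k + 1) := by
      have := cat_last n (k+1) f g
      rwa [← Nat.add_assoc] at this
    rw [h1, h2]

namespace MMSetting

variable {S : Type*} [MeasurableSpace S] [MeasurableSingletonClass S] [Countable S]
variable {Ω : Type*} [MeasurableSpace Ω]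
variable (X : MMSetting S Ω)

lemma exists_path (i j : S) :
    ∃ (n : ℕ) (f : ℕ → S), f 0 = i ∧ f n = j ∧
      ∏ k ∈ Finset.range n, X.p (f k) (f (k+1)) ≠ 0 := by
  classical
  obtain ⟨m, hm⟩ := X.irreducible i j
  haveI := X.prob i
  set ex : (Fin (m+1) → S) → (ℕ → S) := fun q k => if h : k < m+1 then q ⟨k, h⟩ else j with hex
  have hcover : {ω | X.M m ω = j} ⊆ ⋃ q : Fin (m+1) → S, (X.cyl m (ex q) ∩ {ω | X.M m ω = j}) := by
    intro ω hω
    refine Set.mem_iUnion.mpr ⟨fun k => X.M k ω, ?_, hω⟩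
    refine Set.mem_iInter₂.mpr fun k hk => ?_
    have hk' : k < m+1 := Finset.mem_range.mp hk
    show X.M k ω = _
    simp [hex, hk']
    intro h; exfalso; omega
  have hne : ∃ q : Fin (m+1) → S, X.P i (X.cyl m (ex q) ∩ {ω | X.M m ω = j}) ≠ 0 := by
    by_contra hh
    push_neg at hh
    have h0 : X.P i {ω | X.M m ω = j} = 0 :=
      le_antisymm ((measure_mono hcover).trans ((measure_iUnion_le _).trans (by simp [hh])))
        zero_le
    exact hm.ne' h0
  obtain ⟨q, hq⟩ := hne
  have hcylpos : X.P i (X.cyl m (ex q)) ≠ 0 :=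
    fun h => hq (measure_mono_null Set.inter_subset_left h)
  have hq0 : ex q 0 = i := by
    by_contra hne0
    apply hcylpos
    have hsub : X.cyl m (ex q) ⊆ {ω | X.M 0 ω = ex q 0} :=
      fun ω hω => X.mem_cyl hω (Nat.zero_le m)
    refine measure_mono_null hsub ?_
    have h1 : X.P i {ω | X.M 0 ω = i} = 1 := X.start i
    have hsub2 : {ω | X.M 0 ω = ex q 0} ⊆ {ω | X.M 0 ω = i}ᶜ := by
      intro ω hω
      simp only [Set.mem_compl_iff, Set.mem_setOf_eq] at *
      rw [hω]
      exact hne0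
    refine measure_mono_null hsub2 ?_
    have hms : MeasurableSet {ω | X.M 0 ω = i} := (X.measM 0) (measurableSet_singleton i)
    rw [measure_compl hms (measure_ne_top _ _), h1]
    simp
  have hqm : ex q m = j := by
    by_contra hnem
    apply hq
    have hempty : X.cyl m (ex q) ∩ {ω | X.M m ω = j} = ∅ := by
      rw [Set.eq_empty_iff_forall_notMem]
      rintro ω ⟨hc, hM⟩
      exact hnem (by rw [← X.mem_cyl hc le_rfl]; exact hM)
    rw [hempty]
    exact measure_empty
  refine ⟨m, ex q, hq0, hqm, ?_⟩
  rw [← X.chain' i m (ex q) hq0]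
  exact hcylpos

lemma exists_cycle (j l : S) (hjl : X.p j l ≠ 0) :
    ∃ (n : ℕ) (f : ℕ → S), 0 < n ∧ f 0 = j ∧ f 1 = l ∧ f n = j ∧
      (∀ k, 0 < k → k < n → f k ≠ j) ∧ ∏ k ∈ Finset.range n, X.p (f k) (f (k+1)) ≠ 0 := by
  classical
  by_cases hlj : l = j
  · refine ⟨1, fun _ => j, one_pos, rfl, hlj.symm, rfl, fun k hk0 hk1 => absurd hk1 (by omega), ?_⟩
    rw [Finset.prod_range_one]
    rw [hlj] at hjl
    exact hjl
  · obtain ⟨m, g, hg0, hgm, hgp⟩ := X.exists_path l j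
    have hfactors : ∀ k, k < m → X.p (g k) (g (k+1)) ≠ 0 := fun k hk =>
      Finset.prod_ne_zero_iff.mp hgp k (Finset.mem_range.mpr hk)
    have hmem : m ∈ {k | g k = j} := hgm
    set t := sInf {k | g k = j} with ht
    have htmem : g t = j := Nat.sInf_mem ⟨m, hmem⟩
    have htm : t ≤ m := Nat.sInf_le hmem
    have ht0 : t ≠ 0 := fun h => hlj (by rw [← hg0, ← h]; exact htmem)
    set f : ℕ → S := fun k => if k = 0 then j else g (k-1) with hf
    have hf1 : ∀ k, f (k+1) = g k := fun k => by simp [hf]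
    refine ⟨t+1, f, Nat.succ_pos t, if_pos rfl, by rw [hf1 0]; exact hg0,
      by rw [hf1 t]; exact htmem, ?_, ?_⟩
    · intro k hk0 hkt hkj
      obtain ⟨k', rfl⟩ := Nat.exists_eq_succ_of_ne_zero hk0.ne'
      rw [hf1 k'] at hkj
      exact Nat.notMem_of_lt_sInf (show k' < sInf {k | g k = j} by omega) hkj
    · refine Finset.prod_ne_zero_iff.mpr fun k hk => ?_
      have hk' : k < t + 1 := Finset.mem_range.mp hk
      rcases Nat.eq_zero_or_pos k with rfl | hk0
      · have hfz : f 0 = j := if_pos rfl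
        rw [hfz, hf1 0, hg0]
        exact hjl
      · obtain ⟨k', rfl⟩ := Nat.exists_eq_succ_of_ne_zero hk0.ne'
        rw [hf1 k', hf1 (k'+1)]
        exact hfactors k' (by omega)

lemma diracEdge_of_ppos (hone : ∀ i : S, X.P i {ω | X.Ai i ω = 1} = 1) {j l : S}
    (hjl : X.p j l ≠ 0) : X.DiracEdge j l := by
  obtain ⟨n, f, h0, hf0, hf1, hfn, hint, hp⟩ := X.exists_cycle j l hjl
  have hcyl : X.P j (X.cyl n f) ≠ 0 := by
    rw [X.chain' j n f hf0]
    exact hp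
  obtain ⟨hd, -⟩ := X.cycle_prop j (hone j) n f h0 hf0 hfn hint hcyl
  have := hd 0 h0
  rwa [hf0, show f (0+1) = l from hf1] at this

lemma cycle_aval_one (hone : ∀ i : S, X.P i {ω | X.Ai i ω = 1} = 1) (i : S) :
    ∀ n (f : ℕ → S), f 0 = i → f n = i →
      (∏ k ∈ Finset.range n, X.p (f k) (f (k+1))) ≠ 0 →
      ∏ k ∈ Finset.range n, X.aval (f k) (f (k+1)) = 1 := by
  intro n
  induction n using Nat.strong_induction_on with
  | _ n ih =>
    intro f hf0 hfn hp
    rcases Nat.eq_zero_or_pos n with rfl | h0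
    · simp
    · have hfactors : ∀ k, k < n → X.p (f k) (f (k+1)) ≠ 0 := fun k hk =>
        Finset.prod_ne_zero_iff.mp hp k (Finset.mem_range.mpr hk)
      set t := sInf {k | 0 < k ∧ f k = i} with ht
      have hmem : n ∈ {k | 0 < k ∧ f k = i} := ⟨h0, hfn⟩
      have htmem := Nat.sInf_mem ⟨n, hmem⟩
      have htn : t ≤ n := Nat.sInf_le hmem
      have ht0 : 0 < t := htmem.1
      have hti : f t = i := htmem.2
      have hpre : X.P i (X.cyl t f) ≠ 0 := by
        rw [X.chain' i t f hf0]
        exact Finset.prod_ne_zero_iff.mpr fun k hk =>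
          hfactors k (lt_of_lt_of_le (Finset.mem_range.mp hk) htn)
      have hint : ∀ k, 0 < k → k < t → f k ≠ i := fun k hk0 hkt hki =>
        Nat.notMem_of_lt_sInf (show k < sInf {k | 0 < k ∧ f k = i} from hkt) ⟨hk0, hki⟩
      obtain ⟨-, hprodpre⟩ := X.cycle_prop i (hone i) t f ht0 hf0 hti hint hpre
      set g : ℕ → S := fun k => f (t + k) with hg
      have hsplit : n = t + (n - t) := by omega
      have hge : ∀ k, g (k+1) = f (t + k + 1) := fun k => rfl
      have hgp : ∏ k ∈ Finset.range (n - t), X.p (g k) (g (k+1)) ≠ 0 := by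
        refine Finset.prod_ne_zero_iff.mpr fun k hk => ?_
        have hk' := Finset.mem_range.mp hk
        have h2 := hfactors (t+k) (by omega)
        have he1 : g k = f (t + k) := rfl
        rw [he1, hge k]
        exact h2
      have hsuffix := ih (n - t) (by omega) g (by show f (t + 0) = i; simpa using hti)
        (by show f (t + (n - t)) = i; rw [show t + (n - t) = n by omega]; exact hfn) hgp
      rw [hsplit, Finset.prod_range_add]
      have he2 : ∀ k, X.aval (f (t + k)) (f (t + k + 1)) = X.aval (g k) (g (k+1)) := by
        intro k
        have he1 : g k = f (t + k) := rfl
        rw [he1, hge k]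
      rw [Finset.prod_congr rfl fun k _ => he2 k, hprodpre, hsuffix, one_mul]

lemma path_mul_one (hone : ∀ i : S, X.P i {ω | X.Ai i ω = 1} = 1) {i j : S}
    {n : ℕ} {f : ℕ → S} (hf0 : f 0 = i) (hfn : f n = j)
    (hfp : ∏ k ∈ Finset.range n, X.p (f k) (f (k+1)) ≠ 0)
    {m : ℕ} {g : ℕ → S} (hg0 : g 0 = j) (hgm : g m = i)
    (hgp : ∏ k ∈ Finset.range m, X.p (g k) (g (k+1)) ≠ 0) :
    (∏ k ∈ Finset.range n, X.aval (f k) (f (k+1)))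
      * ∏ k ∈ Finset.range m, X.aval (g k) (g (k+1)) = 1 := by
  have hjoin : g 0 = f n := by rw [hg0, hfn]
  have hc0 : cat n f g 0 = i := by rw [cat_zero hjoin, hf0]
  have hcn : cat n f g (n + m) = i := by rw [cat_last n m f g, hgm]
  have hcp : ∏ k ∈ Finset.range (n + m), X.p (cat n f g k) (cat n f g (k+1)) ≠ 0 := by
    rw [cat_edge X.p n m f g hjoin]
    exact mul_ne_zero hfp hgp
  have := X.cycle_aval_one hone i (n + m) (cat n f g) hc0 hcn hcp
  rwa [cat_edge X.aval n m f g hjoin] at this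

lemma path_aval_ne_zero (hone : ∀ i : S, X.P i {ω | X.Ai i ω = 1} = 1) {i j : S}
    {n : ℕ} {f : ℕ → S} (hf0 : f 0 = i) (hfn : f n = j)
    (hfp : ∏ k ∈ Finset.range n, X.p (f k) (f (k+1)) ≠ 0) :
    (∏ k ∈ Finset.range n, X.aval (f k) (f (k+1))) ≠ 0 := by
  obtain ⟨m, g, hg0, hgm, hgp⟩ := X.exists_path j i
  exact left_ne_zero_of_mul_eq_one (X.path_mul_one hone hf0 hfn hfp hg0 hgm hgp)

lemma path_aval_indep (hone : ∀ i : S, X.P i {ω | X.Ai i ω = 1} = 1) {i j : S}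
    {n₁ : ℕ} {f₁ : ℕ → S} (hf₁0 : f₁ 0 = i) (hf₁n : f₁ n₁ = j)
    (hf₁p : ∏ k ∈ Finset.range n₁, X.p (f₁ k) (f₁ (k+1)) ≠ 0)
    {n₂ : ℕ} {f₂ : ℕ → S} (hf₂0 : f₂ 0 = i) (hf₂n : f₂ n₂ = j)
    (hf₂p : ∏ k ∈ Finset.range n₂, X.p (f₂ k) (f₂ (k+1)) ≠ 0) :
    ∏ k ∈ Finset.range n₁, X.aval (f₁ k) (f₁ (k+1))
      = ∏ k ∈ Finset.range n₂, X.aval (f₂ k) (f₂ (k+1)) := by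
  obtain ⟨m, g, hg0, hgm, hgp⟩ := X.exists_path j i
  have h1 := X.path_mul_one hone hf₁0 hf₁n hf₁p hg0 hgm hgp
  have h2 := X.path_mul_one hone hf₂0 hf₂n hf₂p hg0 hgm hgp
  have hgne : (∏ k ∈ Finset.range m, X.aval (g k) (g (k+1))) ≠ 0 := by
    intro h
    rw [h, mul_zero] at h1
    exact one_ne_zero h1.symm
  exact mul_right_cancel₀ hgne (h1.trans h2.symm)

end MMSetting

end AuxMarkov3

section AuxMarkov4

lemma real_sign_div {x y : ℝ} (hx : x ≠ 0) (hy : y ≠ 0) :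
    Real.sign (x / y) = Real.sign x / Real.sign y := by
  rcases lt_or_gt_of_ne hx with h1 | h1 <;> rcases lt_or_gt_of_ne hy with h2 | h2
  · rw [Real.sign_of_pos (div_pos_iff.mpr (Or.inr ⟨h1, h2⟩)), Real.sign_of_neg h1,
      Real.sign_of_neg h2]
    norm_num
  · rw [Real.sign_of_neg (div_neg_iff.mpr (Or.inr ⟨h1, h2⟩)), Real.sign_of_neg h1,
      Real.sign_of_pos h2]
    norm_num
  · rw [Real.sign_of_neg (div_neg_iff.mpr (Or.inl ⟨h1, h2⟩)), Real.sign_of_pos h1,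
      Real.sign_of_neg h2]
    norm_num
  · rw [Real.sign_of_pos (div_pos_iff.mpr (Or.inl ⟨h1, h2⟩)), Real.sign_of_pos h1,
      Real.sign_of_pos h2]
    norm_num

namespace MMSetting

variable {S : Type*} [MeasurableSpace S] [MeasurableSingletonClass S] [Countable S]
variable {Ω : Type*} [MeasurableSpace Ω]
variable (X : MMSetting S Ω)

lemma Pπ_null {s : Set Ω} (hs : ∀ i, X.P i s = 0) : X.Pπ s = 0 := by
  rw [MMSetting.Pπ, Measure.sum_apply_eq_zero]
  intro i
  simp [Measure.smul_apply, hs i]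

lemma traj_ae (hone : ∀ i : S, X.P i {ω | X.Ai i ω = 1} = 1) (i : S) (n : ℕ) :
    X.P i {ω | ¬ ((∏ k ∈ Finset.range n, X.p (X.M k ω) (X.M (k+1) ω)) ≠ 0 ∧
      ∀ k, k < n → X.A k ω = X.aval (X.M k ω) (X.M (k+1) ω))} = 0 := by
  classical
  haveI := X.prob i
  set Bad := {ω | ¬ ((∏ k ∈ Finset.range n, X.p (X.M k ω) (X.M (k+1) ω)) ≠ 0 ∧
      ∀ k, k < n → X.A k ω = X.aval (X.M k ω) (X.M (k+1) ω))} with hBad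
  set ex : (Fin (n+1) → S) → ℕ → S := fun q k => if h : k < n+1 then q ⟨k, h⟩ else i with hex
  have hcover : Bad ⊆ ⋃ q : Fin (n+1) → S, (X.cyl n (ex q) ∩ Bad) := by
    intro ω hω
    refine Set.mem_iUnion.mpr ⟨fun k => X.M k ω, ?_, hω⟩
    refine Set.mem_iInter₂.mpr fun k hk => ?_
    have hk' : k < n+1 := Finset.mem_range.mp hk
    show X.M k ω = _
    simp [hex, hk']
    intro h; exfalso; omega
  have hterm : ∀ q : Fin (n+1) → S, X.P i (X.cyl n (ex q) ∩ Bad) = 0 := by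
    intro q
    by_cases hcyl : X.P i (X.cyl n (ex q)) = 0
    · exact measure_mono_null Set.inter_subset_left hcyl
    have hq0 : ex q 0 = i := by
      by_contra hne0
      apply hcyl
      have hsub : X.cyl n (ex q) ⊆ {ω | X.M 0 ω = ex q 0} :=
        fun ω hω => X.mem_cyl hω (Nat.zero_le n)
      refine measure_mono_null hsub ?_
      have h1 : X.P i {ω | X.M 0 ω = i} = 1 := X.start i
      have hsub2 : {ω | X.M 0 ω = ex q 0} ⊆ {ω | X.M 0 ω = i}ᶜ := by
        intro ω hω
        simp only [Set.mem_compl_iff, Set.mem_setOf_eq] at *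
        rw [hω]
        exact hne0
      refine measure_mono_null hsub2 ?_
      have hms : MeasurableSet {ω | X.M 0 ω = i} := (X.measM 0) (measurableSet_singleton i)
      rw [measure_compl hms (measure_ne_top _ _), h1]
      simp
    have hp : ∏ k ∈ Finset.range n, X.p (ex q k) (ex q (k+1)) ≠ 0 := by
      rw [← X.chain' i n (ex q) hq0]
      exact hcyl
    have hsub : X.cyl n (ex q) ∩ Bad ⊆
        ⋃ k : Fin n, (X.cyl n (ex q) ∩
          {ω | X.A (k : ℕ) ω ∈ ({X.aval (ex q (k : ℕ)) (ex q ((k : ℕ)+1))}ᶜ : Set ℝ)}) := by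
      rintro ω ⟨hc, hb⟩
      rw [hBad, Set.mem_setOf_eq] at hb
      have hM : ∀ k, k ≤ n → X.M k ω = ex q k := fun k hk => X.mem_cyl hc hk
      have hC1 : (∏ k ∈ Finset.range n, X.p (X.M k ω) (X.M (k+1) ω)) ≠ 0 := by
        have heq : ∏ k ∈ Finset.range n, X.p (X.M k ω) (X.M (k+1) ω)
            = ∏ k ∈ Finset.range n, X.p (ex q k) (ex q (k+1)) := by
          refine Finset.prod_congr rfl fun k hk => ?_
          have hk' := Finset.mem_range.mp hk
          rw [hM k (by omega), hM (k+1) (by omega)]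
        rw [heq]
        exact hp
      have hC2 : ¬ (∀ k, k < n → X.A k ω = X.aval (X.M k ω) (X.M (k+1) ω)) :=
        fun hcc => hb ⟨hC1, hcc⟩
      push_neg at hC2
      obtain ⟨k, hk, hAk⟩ := hC2
      refine Set.mem_iUnion.mpr ⟨⟨k, hk⟩, hc, ?_⟩
      simp only [Set.mem_setOf_eq, Set.mem_compl_iff, Set.mem_singleton_iff]
      rw [hM k (by omega), hM (k+1) (by omega)] at hAk
      exact hAk
    refine measure_mono_null hsub ?_
    refine le_antisymm ((measure_iUnion_le _).trans ?_) zero_le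
    have hzero : ∀ k : Fin n, X.P i (X.cyl n (ex q) ∩
        {ω | X.A (k : ℕ) ω ∈ ({X.aval (ex q (k : ℕ)) (ex q ((k : ℕ)+1))}ᶜ : Set ℝ)}) = 0 := by
      intro k
      rw [X.single i n (ex q) hq0 k k.isLt (measurableSet_singleton _).compl]
      have hde : X.DiracEdge (ex q (k : ℕ)) (ex q ((k : ℕ)+1)) :=
        X.diracEdge_of_ppos hone (Finset.prod_ne_zero_iff.mp hp k (Finset.mem_range.mpr k.isLt))
      rw [(X.aval_spec hde).2, Measure.dirac_apply' _ (measurableSet_singleton _).compl]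
      simp
    exact le_of_eq (ENNReal.tsum_eq_zero.mpr hzero)
  refine le_antisymm ((measure_mono hcover).trans ((measure_iUnion_le _).trans ?_)) zero_le
  exact le_of_eq (ENNReal.tsum_eq_zero.mpr hterm)

end MMSetting

end AuxMarkov4

/-- **Lemma 4.9** (sign of `Π_n`). In the Markov-modulated setting with
`P_π(A_1 = 0) = 0`, assume `P_i(A_1^i = 1) = 1` for all `i ∈ S`. Then there exists a
family `(σ_j)_{j ∈ S}` of signs in `{±1}` such that `sign(Π_n) = σ_{M_n} / σ_{M_0}` a.s.
for all `n ≥ 1`, and consequently `Π_n = σ_{M_n} e^{g(M_n) - g(M_0)} / σ_{M_0}` a.s. for a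
suitable function `g : S → ℝ`. -/
theorem sign_of_products
    {S : Type*} [MeasurableSpace S] [MeasurableSingletonClass S] [Countable S]
    {Ω : Type*} [MeasurableSpace Ω] (X : MMSetting S Ω)
    (hA : X.Pπ {ω | X.A 0 ω = 0} = 0)
    (hone : ∀ i : S, X.P i {ω | X.Ai i ω = 1} = 1) :
    ∃ σ : S → ℝ, (∀ j : S, σ j = 1 ∨ σ j = -1) ∧
      (∀ n : ℕ, 1 ≤ n →
        ∀ᵐ ω ∂ X.Pπ, Real.sign (X.Pprod n ω) = σ (X.M n ω) / σ (X.M 0 ω)) ∧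
      ∃ g : S → ℝ, ∀ n : ℕ, 1 ≤ n →
        ∀ᵐ ω ∂ X.Pπ,
          X.Pprod n ω = σ (X.M n ω) * Real.exp (g (X.M n ω) - g (X.M 0 ω)) / σ (X.M 0 ω) := by
  classical
  have hone' : ∀ i : S, X.P i {ω | X.Ai i ω = 1} = 1 := hone
  have hSne : Nonempty S := by
    by_contra hempty
    rw [not_nonempty_iff] at hempty
    have := X.πsum
    rw [tsum_empty] at this
    exact zero_ne_one this
  obtain ⟨i₀⟩ := hSne
  choose len pth hp0 hpend hppos using fun j => X.exists_path i₀ j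
  set H : S → ℝ := fun j => ∏ k ∈ Finset.range (len j), X.aval (pth j k) (pth j (k+1)) with hH
  have hne : ∀ j, H j ≠ 0 := fun j => X.path_aval_ne_zero hone' (hp0 j) (hpend j) (hppos j)
  have hratio : ∀ (j l : S) (n : ℕ) (f : ℕ → S), f 0 = j → f n = l →
      (∏ k ∈ Finset.range n, X.p (f k) (f (k+1))) ≠ 0 →
      ∏ k ∈ Finset.range n, X.aval (f k) (f (k+1)) = H l / H j := by
    intro j l n f hf0 hfn hfp
    have hjoin : f 0 = pth j (len j) := by rw [hf0, hpend j]
    have hcatp : ∏ k ∈ Finset.range (len j + n),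
        X.p (cat (len j) (pth j) f k) (cat (len j) (pth j) f (k+1)) ≠ 0 := by
      rw [cat_edge X.p _ _ _ _ hjoin]
      exact mul_ne_zero (hppos j) hfp
    have hcat0 : cat (len j) (pth j) f 0 = i₀ := by rw [cat_zero hjoin, hp0 j]
    have hcatn : cat (len j) (pth j) f (len j + n) = l := by rw [cat_last]; exact hfn
    have hind := X.path_aval_indep hone' hcat0 hcatn hcatp (hp0 l) (hpend l) (hppos l)
    rw [cat_edge X.aval _ _ _ _ hjoin] at hind
    rw [eq_div_iff (hne j), mul_comm]
    exact hind
  have hmain : ∀ n : ℕ, 1 ≤ n →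
      ∀ᵐ ω ∂ X.Pπ, X.Pprod n ω = H (X.M n ω) / H (X.M 0 ω) := by
    intro n _
    have hnull : X.Pπ {ω | ¬ ((∏ k ∈ Finset.range n, X.p (X.M k ω) (X.M (k+1) ω)) ≠ 0 ∧
        ∀ k, k < n → X.A k ω = X.aval (X.M k ω) (X.M (k+1) ω))} = 0 :=
      X.Pπ_null fun i => X.traj_ae hone' i n
    rw [ae_iff]
    refine measure_mono_null ?_ hnull
    intro ω hω
    simp only [Set.mem_setOf_eq] at *
    rintro ⟨hC1, hC2⟩
    apply hω
    have h1 : X.Pprod n ω = ∏ k ∈ Finset.range n, X.aval (X.M k ω) (X.M (k+1) ω) :=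
      Finset.prod_congr rfl fun k hk => hC2 k (Finset.mem_range.mp hk)
    rw [h1, hratio (X.M 0 ω) (X.M n ω) n (fun k => X.M k ω) rfl rfl hC1]
  set σ : S → ℝ := fun j => Real.sign (H j) with hσ
  set g : S → ℝ := fun j => Real.log |H j| with hg
  have hσval : ∀ j, σ j = 1 ∨ σ j = -1 := fun j =>
    Or.symm (Real.sign_apply_eq_of_ne_zero _ (hne j))
  have hσne : ∀ j, σ j ≠ 0 := fun j => by
    rcases hσval j with h | h <;> rw [h] <;> norm_num
  have hσexp : ∀ j, σ j * Real.exp (g j) = H j := by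
    intro j
    have hlog : Real.exp (g j) = |H j| := Real.exp_log (abs_pos.mpr (hne j))
    rw [hlog]
    show Real.sign (H j) * |H j| = H j
    rcases lt_or_gt_of_ne (hne j) with hlt | hgt
    · rw [Real.sign_of_neg hlt, abs_of_neg hlt]
      ring
    · rw [Real.sign_of_pos hgt, abs_of_pos hgt]
      ring
  refine ⟨σ, hσval, ?_, g, ?_⟩
  · intro n hn
    filter_upwards [hmain n hn] with ω hω
    rw [hω]
    exact real_sign_div (hne _) (hne _)
  · intro n hn
    filter_upwards [hmain n hn] with ω hω
    rw [hω, ← hσexp (X.M n ω), ← hσexp (X.M 0 ω), Real.exp_sub]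
    rw [mul_div_mul_comm, mul_div_right_comm]


end Perpetuities
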